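/- Let $D \subset \mathbb{R}^2$ be bounded and let $u \in C^2(\overline{D};\mathbb{R}^2)$, $\boldsymbol{F} \in C^1_c(D;\mathbb{R}^2)$. Then $\big(\int_D (f_\varepsilon(u), (\boldsymbol{F}\cdot\nabla)u)\,dx\big)^2 \leq C(\|\boldsymbol{F}\|_{C^1}, D)\, (E_\varepsilon(u))^2$, where $f_\varepsilon(u) = \Delta u + \varepsilon^{-2}(1-|u|^2)u$ and $E_\varepsilon(u)$ is the Ginzburg-Landau energy. -/

import Mathlib

set_option maxHeartbeats 2000000


open MeasureTheory

noncomputable def pd (f : (Fin 2 → ℝ) → ℝ) (i : Fin 2) (x : Fin 2 → ℝ) : ℝ :=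
  fderiv ℝ f x (Pi.single i 1)


lemma bdd_of_cs {g : (Fin 2 → ℝ) → ℝ} (hg : Continuous g) (hgc : HasCompactSupport g) :
    ∃ B : ℝ, 0 ≤ B ∧ ∀ x, |g x| ≤ B := by
  obtain ⟨C, hC⟩ := hgc.exists_bound_of_continuousOn hg.continuousOn
  refine ⟨max C 0, le_max_right _ _, fun x => ?_⟩
  by_cases hx : x ∈ tsupport g
  · exact le_max_of_le_left (by simpa using hC x hx)
  · simp [image_eq_zero_of_notMem_tsupport hx]

lemma abs_mul3_le {b B p q : ℝ} (hb : |b| ≤ B) : |b * (p * q)| ≤ B * ((p^2+q^2)/2) := by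
  rw [abs_mul]
  have h1 : |p*q| ≤ (p^2+q^2)/2 := by
    rw [abs_mul]
    nlinarith [sq_nonneg (|p|-|q|), sq_abs p, sq_abs q, abs_nonneg p, abs_nonneg q]
  have hb0 : 0 ≤ |b| := abs_nonneg _
  nlinarith [abs_nonneg (p*q)]

lemma divergence_zero (W : (Fin 2 → ℝ) → Fin 2 → ℝ)
    (W' : Fin 2 → (Fin 2 → ℝ) → ((Fin 2 → ℝ) →L[ℝ] ℝ))
    (hW : Continuous W)
    (hWd : ∀ (i : Fin 2) (x), HasFDerivAt (fun y => W y i) (W' i x) x)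
    (hdiv : Continuous fun x => ∑ i, W' i x (Pi.single i 1))
    (hWc : HasCompactSupport W)
    (D : Set (Fin 2 → ℝ)) (hsupp : tsupport W ⊆ D) :
    ∫ x in D, ∑ i, W' i x (Pi.single i 1) = 0 := by
  -- div vanishes outside tsupport W
  have hdiv0 : ∀ x ∉ tsupport W, (∑ i, W' i x (Pi.single i 1)) = 0 := by
    intro x hx
    have hopen : IsOpen (tsupport W)ᶜ := (isClosed_tsupport W).isOpen_compl
    have hz : ∀ i : Fin 2, W' i x = 0 := by
      intro i
      have hev : (fun y => W y i) =ᶠ[nhds x] (fun _ => (0:ℝ)) := by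
        filter_upwards [hopen.mem_nhds hx] with y hy
        have : W y = 0 := image_eq_zero_of_notMem_tsupport hy
        simp [this]
      have h1 : fderiv ℝ (fun y => W y i) x = W' i x := (hWd i x).fderiv
      have h2 : fderiv ℝ (fun y => W y i) x = fderiv ℝ (fun _ => (0:ℝ)) x := hev.fderiv_eq
      rw [← h1, h2, fderiv_fun_const]
      rfl
    simp [hz]
  -- compact support of div
  have hdivsupp : HasCompactSupport (fun x => ∑ i, W' i x (Pi.single i 1)) := by
    apply HasCompactSupport.intro hWc
    intro x hx
    exact hdiv0 x hx
  have hint : Integrable (fun x => ∑ i, W' i x (Pi.single i 1)) :=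
    hdiv.integrable_of_hasCompactSupport hdivsupp
  -- choose a big box
  obtain ⟨R, hR0, hRball⟩ : ∃ R : ℝ, 0 < R ∧ tsupport W ⊆ Metric.ball 0 R := by
    obtain ⟨R, hR⟩ := hWc.isBounded.subset_ball 0
    exact ⟨|R| + 1, by positivity, hR.trans (Metric.ball_subset_ball (by
      cases abs_cases R with
      | inl h => linarith [h.1]
      | inr h => linarith [h.1]))⟩
  set a : Fin 2 → ℝ := fun _ => -R with ha
  set b : Fin 2 → ℝ := fun _ => R with hb
  have hab : a ≤ b := fun i => by simp [ha, hb]; linarith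
  have hsub : tsupport W ⊆ Set.Icc a b := by
    intro x hx
    have hn : ‖x‖ < R := by
      have := hRball hx
      rwa [Metric.mem_ball, dist_zero_right] at this
    constructor <;> intro i <;> have hi := norm_le_pi_norm x i <;>
      simp only [Real.norm_eq_abs] at hi <;> have := abs_le.mp (le_of_lt (lt_of_le_of_lt hi hn))
    · simpa [ha] using this.1
    · simpa [hb] using this.2
  -- faces vanish
  have hface : ∀ (i : Fin 2) (c : ℝ), |c| = R → ∀ z : Fin 1 → ℝ,
      W ((Fin.insertNth i c z : Fin 2 → ℝ)) = 0 := by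
    intro i c hc z
    apply image_eq_zero_of_notMem_tsupport
    intro hmem
    have hn : ‖(Fin.insertNth i c z : Fin 2 → ℝ)‖ < R := by
      have := hRball hmem
      rwa [Metric.mem_ball, dist_zero_right] at this
    have hi := norm_le_pi_norm ((Fin.insertNth i c z : Fin 2 → ℝ)) i
    simp only [Real.norm_eq_abs, Fin.insertNth_apply_same] at hi
    linarith [hc ▸ hi]
  have hdivthm := MeasureTheory.integral_divergence_of_hasFDerivAt_off_countable'
    (n := 1) a b hab (fun i x => W x i) (fun i x => W' i x) ∅ Set.countable_empty
    (fun i => ((continuous_apply i).comp hW).continuousOn)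
    (fun x _ i => hWd i x) (hint.integrableOn)
  have hfacezero : ∀ i : Fin 2, ((∫ z in Set.Icc (a ∘ i.succAbove) (b ∘ i.succAbove),
        W (Fin.insertNth i (b i) z) i) - ∫ z in Set.Icc (a ∘ i.succAbove) (b ∘ i.succAbove),
        W (Fin.insertNth i (a i) z) i) = 0 := by
    intro i
    have h1 : ∀ z : Fin 1 → ℝ, W (Fin.insertNth i (b i) z) i = 0 := by
      intro z
      rw [hface i (b i) (by simp [hb, abs_of_pos hR0]) z]; rfl
    have h2 : ∀ z : Fin 1 → ℝ, W (Fin.insertNth i (a i) z) i = 0 := by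
      intro z
      rw [hface i (a i) (by simp [ha, abs_of_pos hR0]) z]; rfl
    simp [h1, h2]
  rw [Finset.sum_congr rfl (fun i _ => hfacezero i)] at hdivthm
  simp only [Finset.sum_const_zero] at hdivthm
  have e1 : ∫ x in D, ∑ i, W' i x (Pi.single i 1) = ∫ x, ∑ i, W' i x (Pi.single i 1) :=
    setIntegral_eq_integral_of_forall_compl_eq_zero (fun x hx => hdiv0 x (fun h => hx (hsupp h)))
  have e2 : ∫ x in Set.Icc a b, ∑ i, W' i x (Pi.single i 1)
      = ∫ x, ∑ i, W' i x (Pi.single i 1) :=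
    setIntegral_eq_integral_of_forall_compl_eq_zero (fun x hx => hdiv0 x (fun h => hx (hsub h)))
  rw [e1, ← e2]
  exact hdivthm
lemma hasFDerivAt_sq {f : (Fin 2 → ℝ) → ℝ} {f' : (Fin 2 → ℝ) →L[ℝ] ℝ} {x : Fin 2 → ℝ}
    (hf : HasFDerivAt f f' x) :
    HasFDerivAt (fun y => f y ^ 2) (((2:ℝ) * f x) • f') x := by
  have h2 : (fun y => f y ^ 2) = fun y => f y * f y := by funext y; ring
  rw [h2]
  have h3 := hf.mul hf
  rwa [show f x • f' + f x • f' = ((2:ℝ) * f x) • f' by rw [two_mul, add_smul]] at h3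

lemma div_identity (F u : (Fin 2 → ℝ) → Fin 2 → ℝ) (hF : ContDiff ℝ 1 F)
    (hu : ContDiff ℝ 2 u) (c : ℝ) (x : Fin 2 → ℝ) :
    ∑ i : Fin 2, fderiv ℝ (fun y =>
        (∑ j : Fin 2, pd (fun z => u z j) i y *
          (∑ l : Fin 2, F y l * pd (fun z => u z j) l y))
        - F y i * ((1/2) * ∑ j : Fin 2, ∑ k : Fin 2, (pd (fun z => u z k) j y)^2
            + c * (1 - ∑ m : Fin 2, (u y m)^2)^2)) x (Pi.single i 1)
    = (∑ j : Fin 2,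
          ((∑ k : Fin 2, pd (pd (fun y => u y j) k) k x)
              + (4*c) * (1 - ∑ i : Fin 2, (u x i) ^ 2) * u x j)
            * (∑ k : Fin 2, F x k * pd (fun y => u y j) k x))
      - ((∑ i : Fin 2, pd (fun y => F y i) i x) *
            ((1/2) * ∑ j : Fin 2, ∑ k : Fin 2, (pd (fun y => u y k) j x)^2
              + c * (1 - ∑ m : Fin 2, (u x m)^2)^2)
          - ∑ j : Fin 2, ∑ i : Fin 2, ∑ l : Fin 2,
              pd (fun y => F y l) i x * pd (fun y => u y j) l x
                * pd (fun y => u y j) i x) := by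
  have hA : ∀ j k : Fin 2, HasFDerivAt (pd (fun z => u z j) k)
      ((ContinuousLinearMap.apply ℝ ℝ ((Pi.single k 1 : Fin 2 → ℝ))).comp
        (fderiv ℝ (fderiv ℝ (fun z => u z j)) x)) x := by
    intro j k
    have huj : ContDiff ℝ 2 (fun z => u z j) := (contDiff_pi.mp hu) j
    have h1 : ContDiff ℝ 1 (fderiv ℝ (fun z => u z j)) := huj.fderiv_right (by norm_num)
    have h2 : HasFDerivAt (fderiv ℝ (fun z => u z j))
        (fderiv ℝ (fderiv ℝ (fun z => u z j)) x) x :=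
      (h1.differentiable (by norm_num) x).hasFDerivAt
    exact ((ContinuousLinearMap.apply ℝ ℝ ((Pi.single k 1 : Fin 2 → ℝ))).hasFDerivAt).comp x h2
  have hU : ∀ j : Fin 2, HasFDerivAt (fun y => u y j) (fderiv ℝ (fun y => u y j) x) x :=
    fun j => (((contDiff_pi.mp hu) j).differentiable (by norm_num) x).hasFDerivAt
  have hFl : ∀ l : Fin 2, HasFDerivAt (fun y => F y l) (fderiv ℝ (fun y => F y l) x) x :=
    fun l => (((contDiff_pi.mp hF) l).differentiable (by norm_num) x).hasFDerivAt
  have hsymm : ∀ j : Fin 2, ∀ v w : Fin 2 → ℝ,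
      fderiv ℝ (fderiv ℝ (fun z => u z j)) x v w
        = fderiv ℝ (fderiv ℝ (fun z => u z j)) x w v := by
    intro j v w
    exact (((contDiff_pi.mp hu) j).contDiffAt.isSymmSndFDerivAt (by simp)).eq v w
  have key : ∀ j k k' : Fin 2, pd (pd (fun y => u y j) k) k' x
      = fderiv ℝ (fderiv ℝ (fun z => u z j)) x (Pi.single k' 1) (Pi.single k 1) := by
    intro j k k'
    show fderiv ℝ (pd (fun y => u y j) k) x (Pi.single k' 1) = _
    rw [(hA j k).fderiv]
    simp
  have hP : ∀ j : Fin 2, HasFDerivAt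
      (fun y => ∑ l : Fin 2, F y l * pd (fun z => u z j) l y)
      (∑ l : Fin 2, (F x l • ((ContinuousLinearMap.apply ℝ ℝ ((Pi.single l 1 : Fin 2 → ℝ))).comp
          (fderiv ℝ (fderiv ℝ (fun z => u z j)) x))
        + pd (fun z => u z j) l x • fderiv ℝ (fun y => F y l) x)) x :=
    fun j => HasFDerivAt.fun_sum (fun l _ => (hFl l).mul (hA j l))
  have heps := ((HasFDerivAt.fun_sum (fun j (_ : j ∈ Finset.univ) =>
      HasFDerivAt.fun_sum (fun k (_ : k ∈ Finset.univ) => hasFDerivAt_sq (hA k j)))).const_mul (1/2:ℝ)).fun_add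
    (((hasFDerivAt_sq ((hasFDerivAt_const (1:ℝ) x).fun_sub
      (HasFDerivAt.fun_sum (fun m (_ : m ∈ Finset.univ) => hasFDerivAt_sq (hU m)))))).const_mul c)
  have hWi := fun i : Fin 2 =>
    (HasFDerivAt.fun_sum (fun j (_ : j ∈ Finset.univ) => (hA j i).fun_mul (hP j))).fun_sub
      ((hFl i).fun_mul heps)
  rw [Fin.sum_univ_two, (hWi 0).fderiv, (hWi 1).fderiv]
  simp only [key]
  simp only [pd]
  simp only [ContinuousLinearMap.add_apply, ContinuousLinearMap.sub_apply,
    ContinuousLinearMap.smul_apply, ContinuousLinearMap.coe_sum', Finset.sum_apply,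
    ContinuousLinearMap.comp_apply, ContinuousLinearMap.apply_apply, smul_eq_mul,
    ContinuousLinearMap.zero_apply, Fin.sum_univ_two, Nat.cast_ofNat, pow_one]
  have h0 := hsymm 0 (Pi.single 1 1) (Pi.single 0 1)
  have h1 := hsymm 1 (Pi.single 1 1) (Pi.single 0 1)
  linear_combination
    (fderiv ℝ (fun z => u z 0) x (Pi.single 1 1) * F x 0
      - F x 1 * fderiv ℝ (fun z => u z 0) x (Pi.single 0 1)) * h0 +
    (fderiv ℝ (fun z => u z 1) x (Pi.single 1 1) * F x 0
      - F x 1 * fderiv ℝ (fun z => u z 1) x (Pi.single 0 1)) * h1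

/-- For bounded `D ⊆ ℝ²` and `F ∈ C¹_c(D;ℝ²)` there is `C = C(‖F‖_{C¹}, D)` with
`(∫_D (f_ε(u), (F·∇)u) dx)² ≤ C (E_ε(u))²` for all `ε > 0` and `u ∈ C²(D̄;ℝ²)`. -/
theorem stmt15 (D : Set (Fin 2 → ℝ)) (hD : IsOpen D) (hDb : Bornology.IsBounded D)
    (F : (Fin 2 → ℝ) → Fin 2 → ℝ) (hF : ContDiff ℝ 1 F)
    (hFc : HasCompactSupport F) (hFsupp : tsupport F ⊆ D) :
    ∃ C : ℝ, ∀ ε : ℝ, 0 < ε → ∀ u : (Fin 2 → ℝ) → Fin 2 → ℝ, ContDiff ℝ 2 u →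
      (∫ x in D, ∑ j : Fin 2,
          ((∑ k : Fin 2, pd (pd (fun y => u y j) k) k x)
              + (1 / ε ^ 2) * (1 - ∑ i : Fin 2, (u x i) ^ 2) * u x j)
            * (∑ k : Fin 2, F x k * pd (fun y => u y j) k x)) ^ 2
        ≤ C * (∫ x in D,
            (1 / 2) * ∑ j : Fin 2, ∑ k : Fin 2, (pd (fun y => u y k) j x) ^ 2
              + (1 / (4 * ε ^ 2)) * (1 - ∑ i : Fin 2, (u x i) ^ 2) ^ 2) ^ 2 := by
  classical
  have hFl : ∀ l : Fin 2, ContDiff ℝ 1 (fun y => F y l) := contDiff_pi.mp hF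
  -- continuity and compact support of derivatives of F
  have hbFc : ∀ i l : Fin 2, Continuous (fun x => pd (fun y => F y l) i x) := by
    intro i l
    exact ((ContinuousLinearMap.apply ℝ ℝ ((Pi.single i 1 : Fin 2 → ℝ))).continuous).comp
      ((hFl l).continuous_fderiv (by norm_num))
  have hbF0 : ∀ (i l : Fin 2) (x), x ∉ tsupport F → pd (fun y => F y l) i x = 0 := by
    intro i l x hx
    have hopen : IsOpen (tsupport F)ᶜ := (isClosed_tsupport F).isOpen_compl
    have hev : (fun y => F y l) =ᶠ[nhds x] (fun _ => (0:ℝ)) := by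
      filter_upwards [hopen.mem_nhds hx] with y hy
      have : F y = 0 := image_eq_zero_of_notMem_tsupport hy
      simp [this]
    rw [pd, hev.fderiv_eq, fderiv_fun_const]
    rfl
  have hbFs : ∀ i l : Fin 2, HasCompactSupport (fun x => pd (fun y => F y l) i x) := by
    intro i l
    apply HasCompactSupport.intro hFc
    intro x hx
    exact hbF0 i l x hx
  -- a uniform bound B on all first derivatives of F
  have hex : ∀ i l : Fin 2, ∃ B : ℝ, 0 ≤ B ∧ ∀ x, |pd (fun y => F y l) i x| ≤ B :=
    fun i l => bdd_of_cs (hbFc i l) (hbFs i l)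
  obtain ⟨B00, hB00n, hB00⟩ := hex 0 0
  obtain ⟨B01, hB01n, hB01⟩ := hex 0 1
  obtain ⟨B10, hB10n, hB10⟩ := hex 1 0
  obtain ⟨B11, hB11n, hB11⟩ := hex 1 1
  set B : ℝ := max (max B00 B01) (max B10 B11) with hBdef
  have hB0 : 0 ≤ B := le_trans hB00n (le_trans (le_max_left _ _) (le_max_left _ _))
  have hB : ∀ i l : Fin 2, ∀ x, |pd (fun y => F y l) i x| ≤ B := by
    intro i l x
    fin_cases i <;> fin_cases l
    · exact (hB00 x).trans ((le_max_left _ _).trans (le_max_left _ _))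
    · exact (hB01 x).trans ((le_max_right _ _).trans (le_max_left _ _))
    · exact (hB10 x).trans ((le_max_left _ _).trans (le_max_right _ _))
    · exact (hB11 x).trans ((le_max_right _ _).trans (le_max_right _ _))
  refine ⟨(6*B)^2, ?_⟩
  intro ε hε u hu
  -- smoothness facts about u
  have hujC : ∀ j : Fin 2, ContDiff ℝ 2 (fun z => u z j) := contDiff_pi.mp hu
  have hAC : ∀ j k : Fin 2, ContDiff ℝ 1 (fun y => pd (fun z => u z j) k y) := by
    intro j k
    exact (ContinuousLinearMap.apply ℝ ℝ ((Pi.single k 1 : Fin 2 → ℝ))).contDiff.comp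
      ((hujC j).fderiv_right (by norm_num))
  have heC : ContDiff ℝ 1 (fun y => (1/2) * ∑ j : Fin 2, ∑ k : Fin 2,
      (pd (fun z => u z k) j y)^2 + (1/(4*ε^2)) * (1 - ∑ m : Fin 2, (u y m)^2)^2) := by
    apply ContDiff.add
    · exact contDiff_const.mul (ContDiff.sum fun j _ => ContDiff.sum fun k _ => (hAC k j).pow 2)
    · exact contDiff_const.mul ((contDiff_const.sub
        (ContDiff.sum fun m _ => ((hujC m).of_le one_le_two).pow 2)).pow 2)
  have hWC1 : ∀ i : Fin 2, ContDiff ℝ 1 (fun y =>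
      (∑ j : Fin 2, pd (fun z => u z j) i y *
        (∑ l : Fin 2, F y l * pd (fun z => u z j) l y))
      - F y i * ((1/2) * ∑ j : Fin 2, ∑ k : Fin 2, (pd (fun z => u z k) j y)^2
          + (1/(4*ε^2)) * (1 - ∑ m : Fin 2, (u y m)^2)^2)) := by
    intro i
    exact ((ContDiff.sum fun j _ => (hAC j i).mul
      (ContDiff.sum fun l _ => (hFl l).mul (hAC j l))).sub ((hFl i).mul heC))
  -- the vector field W and its divergence
  have hdiv0 : ∫ x in D, ∑ i : Fin 2, fderiv ℝ (fun y =>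
      (∑ j : Fin 2, pd (fun z => u z j) i y *
        (∑ l : Fin 2, F y l * pd (fun z => u z j) l y))
      - F y i * ((1/2) * ∑ j : Fin 2, ∑ k : Fin 2, (pd (fun z => u z k) j y)^2
          + (1/(4*ε^2)) * (1 - ∑ m : Fin 2, (u y m)^2)^2)) x (Pi.single i 1) = 0 := by
    have hsupW : Function.support (fun y => fun i : Fin 2 =>
        (∑ j : Fin 2, pd (fun z => u z j) i y *
          (∑ l : Fin 2, F y l * pd (fun z => u z j) l y))
        - F y i * ((1/2) * ∑ j : Fin 2, ∑ k : Fin 2, (pd (fun z => u z k) j y)^2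
            + (1/(4*ε^2)) * (1 - ∑ m : Fin 2, (u y m)^2)^2)) ⊆ tsupport F := by
      intro x hx
      by_contra hxF
      apply hx
      have hFx : F x = 0 := image_eq_zero_of_notMem_tsupport hxF
      have h0 : ∀ l : Fin 2, F x l = 0 := fun l => by rw [hFx]; rfl
      funext i
      simp [h0]
    have htsW : tsupport (fun y => fun i : Fin 2 =>
        (∑ j : Fin 2, pd (fun z => u z j) i y *
          (∑ l : Fin 2, F y l * pd (fun z => u z j) l y))
        - F y i * ((1/2) * ∑ j : Fin 2, ∑ k : Fin 2, (pd (fun z => u z k) j y)^2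
            + (1/(4*ε^2)) * (1 - ∑ m : Fin 2, (u y m)^2)^2)) ⊆ tsupport F :=
      closure_minimal hsupW (isClosed_tsupport F)
    exact divergence_zero _ _
      (continuous_pi fun i => (hWC1 i).continuous)
      (fun i x => ((hWC1 i).differentiable (by norm_num) x).hasFDerivAt)
      (continuous_finset_sum _ fun i _ =>
        ((ContinuousLinearMap.apply ℝ ℝ ((Pi.single i 1 : Fin 2 → ℝ))).continuous).comp
          ((hWC1 i).continuous_fderiv (by norm_num)))
      (hFc.of_isClosed_subset (isClosed_tsupport _) htsW)
      D (htsW.trans hFsupp)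
  -- pointwise bound on the remainder R
  have hRB : ∀ x, |(∑ i : Fin 2, pd (fun y => F y i) i x) *
        ((1/2) * ∑ j : Fin 2, ∑ k : Fin 2, (pd (fun y => u y k) j x)^2
          + (1/(4*ε^2)) * (1 - ∑ m : Fin 2, (u x m)^2)^2)
      - ∑ j : Fin 2, ∑ i : Fin 2, ∑ l : Fin 2,
          pd (fun y => F y l) i x * pd (fun y => u y j) l x * pd (fun y => u y j) i x|
      ≤ (6*B) * ((1/2) * ∑ j : Fin 2, ∑ k : Fin 2, (pd (fun y => u y k) j x)^2
          + (1/(4*ε^2)) * (1 - ∑ m : Fin 2, (u x m)^2)^2) := by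
    intro x
    have hc0 : (0:ℝ) ≤ 1/(4*ε^2) := by positivity
    simp only [Fin.sum_univ_two]
    have he0 : (0:ℝ) ≤ (1/2 * ((pd (fun y => u y 0) 0 x)^2 + (pd (fun y => u y 1) 0 x)^2 + ((pd (fun y => u y 0) 1 x)^2 + (pd (fun y => u y 1) 1 x)^2)) + 1/(4*ε^2) * (1 - ((u x 0)^2 + (u x 1)^2))^2) := by positivity
    have h2e : (pd (fun y => u y 0) 0 x)^2 + (pd (fun y => u y 1) 0 x)^2
        + (pd (fun y => u y 0) 1 x)^2 + (pd (fun y => u y 1) 1 x)^2 ≤ 2 * (1/2 * ((pd (fun y => u y 0) 0 x)^2 + (pd (fun y => u y 1) 0 x)^2 + ((pd (fun y => u y 0) 1 x)^2 + (pd (fun y => u y 1) 1 x)^2)) + 1/(4*ε^2) * (1 - ((u x 0)^2 + (u x 1)^2))^2) := by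
      nlinarith [mul_nonneg hc0 (sq_nonneg (1 - ((u x 0)^2 + (u x 1)^2)))]
    have hBe := mul_le_mul_of_nonneg_left h2e hB0
    have hb00 := abs_le.mp (hB 0 0 x)
    have hb01 := abs_le.mp (hB 0 1 x)
    have hb10 := abs_le.mp (hB 1 0 x)
    have hb11 := abs_le.mp (hB 1 1 x)
    have hm000 := abs_le.mp (abs_mul3_le (B := B) (p := pd (fun y => u y 0) 0 x) (q := pd (fun y => u y 0) 0 x) (hB 0 0 x))
    have hm001 := abs_le.mp (abs_mul3_le (B := B) (p := pd (fun y => u y 0) 1 x) (q := pd (fun y => u y 0) 0 x) (hB 0 1 x))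
    have hm010 := abs_le.mp (abs_mul3_le (B := B) (p := pd (fun y => u y 0) 0 x) (q := pd (fun y => u y 0) 1 x) (hB 1 0 x))
    have hm011 := abs_le.mp (abs_mul3_le (B := B) (p := pd (fun y => u y 0) 1 x) (q := pd (fun y => u y 0) 1 x) (hB 1 1 x))
    have hm100 := abs_le.mp (abs_mul3_le (B := B) (p := pd (fun y => u y 1) 0 x) (q := pd (fun y => u y 1) 0 x) (hB 0 0 x))
    have hm101 := abs_le.mp (abs_mul3_le (B := B) (p := pd (fun y => u y 1) 1 x) (q := pd (fun y => u y 1) 0 x) (hB 0 1 x))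
    have hm110 := abs_le.mp (abs_mul3_le (B := B) (p := pd (fun y => u y 1) 0 x) (q := pd (fun y => u y 1) 1 x) (hB 1 0 x))
    have hm111 := abs_le.mp (abs_mul3_le (B := B) (p := pd (fun y => u y 1) 1 x) (q := pd (fun y => u y 1) 1 x) (hB 1 1 x))
    have hS1 : (0:ℝ) ≤ (2*B - pd (fun y => F y 0) 0 x - pd (fun y => F y 1) 1 x) * (1/2 * ((pd (fun y => u y 0) 0 x)^2 + (pd (fun y => u y 1) 0 x)^2 + ((pd (fun y => u y 0) 1 x)^2 + (pd (fun y => u y 1) 1 x)^2)) + 1/(4*ε^2) * (1 - ((u x 0)^2 + (u x 1)^2))^2) :=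
      mul_nonneg (by linarith [(abs_le.mp (hB 0 0 x)).2, (abs_le.mp (hB 1 1 x)).2]) he0
    have hS2 : (0:ℝ) ≤ (2*B + pd (fun y => F y 0) 0 x + pd (fun y => F y 1) 1 x) * (1/2 * ((pd (fun y => u y 0) 0 x)^2 + (pd (fun y => u y 1) 0 x)^2 + ((pd (fun y => u y 0) 1 x)^2 + (pd (fun y => u y 1) 1 x)^2)) + 1/(4*ε^2) * (1 - ((u x 0)^2 + (u x 1)^2))^2) :=
      mul_nonneg (by linarith [(abs_le.mp (hB 0 0 x)).1, (abs_le.mp (hB 1 1 x)).1]) he0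
    rw [abs_le]
    constructor
    · linarith [hS1, hS2, hBe, he0, hb00.1, hb00.2, hb01.1, hb01.2, hb10.1, hb10.2, hb11.1, hb11.2, hm000.1, hm000.2, hm001.1, hm001.2, hm010.1, hm010.2, hm011.1, hm011.2, hm100.1, hm100.2, hm101.1, hm101.2, hm110.1, hm110.2, hm111.1, hm111.2]
    · linarith [hS1, hS2, hBe, he0, hb00.1, hb00.2, hb01.1, hb01.2, hb10.1, hb10.2, hb11.1, hb11.2, hm000.1, hm000.2, hm001.1, hm001.2, hm010.1, hm010.2, hm011.1, hm011.2, hm100.1, hm100.2, hm101.1, hm101.2, hm110.1, hm110.2, hm111.1, hm111.2]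
  -- integrability tools
  have hK : IsCompact (closure D) := hDb.isCompact_closure
  have hIO : ∀ g : (Fin 2 → ℝ) → ℝ, Continuous g → IntegrableOn g D := fun g hg =>
    ((hg.continuousOn).integrableOn_compact hK).mono_set subset_closure
  have hdivcont : Continuous (fun x => ∑ i : Fin 2, fderiv ℝ (fun y =>
      (∑ j : Fin 2, pd (fun z => u z j) i y *
        (∑ l : Fin 2, F y l * pd (fun z => u z j) l y))
      - F y i * ((1/2) * ∑ j : Fin 2, ∑ k : Fin 2, (pd (fun z => u z k) j y)^2
          + (1/(4*ε^2)) * (1 - ∑ m : Fin 2, (u y m)^2)^2)) x (Pi.single i 1)) :=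
    continuous_finset_sum _ fun i _ =>
      ((ContinuousLinearMap.apply ℝ ℝ ((Pi.single i 1 : Fin 2 → ℝ))).continuous).comp
        ((hWC1 i).continuous_fderiv (by norm_num))
  have hRcont : Continuous (fun x => (∑ i : Fin 2, pd (fun y => F y i) i x) *
        ((1/2) * ∑ j : Fin 2, ∑ k : Fin 2, (pd (fun y => u y k) j x)^2
          + (1/(4*ε^2)) * (1 - ∑ m : Fin 2, (u x m)^2)^2)
      - ∑ j : Fin 2, ∑ i : Fin 2, ∑ l : Fin 2,
          pd (fun y => F y l) i x * pd (fun y => u y j) l x * pd (fun y => u y j) i x) := by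
    apply Continuous.sub
    · exact (continuous_finset_sum _ fun i _ => hbFc i i).mul heC.continuous
    · exact continuous_finset_sum _ fun j _ => continuous_finset_sum _ fun i _ =>
        continuous_finset_sum _ fun l _ =>
          ((hbFc i l).mul (hAC j l).continuous).mul (hAC j i).continuous
  have hid := div_identity F u hF hu (1/(4*ε^2))
  have h4 : (4:ℝ)*(1/(4*ε^2)) = 1 / ε ^ 2 := by
    field_simp
  have hXsplit : (∫ x in D, ∑ j : Fin 2,
          ((∑ k : Fin 2, pd (pd (fun y => u y j) k) k x)
              + (1 / ε ^ 2) * (1 - ∑ i : Fin 2, (u x i) ^ 2) * u x j)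
            * (∑ k : Fin 2, F x k * pd (fun y => u y j) k x)) = ∫ x in D, ((∑ i : Fin 2, fderiv ℝ (fun y =>
      (∑ j : Fin 2, pd (fun z => u z j) i y *
        (∑ l : Fin 2, F y l * pd (fun z => u z j) l y))
      - F y i * ((1/2) * ∑ j : Fin 2, ∑ k : Fin 2, (pd (fun z => u z k) j y)^2
          + (1/(4*ε^2)) * (1 - ∑ m : Fin 2, (u y m)^2)^2)) x (Pi.single i 1)) + ((∑ i : Fin 2, pd (fun y => F y i) i x) *
        ((1/2) * ∑ j : Fin 2, ∑ k : Fin 2, (pd (fun y => u y k) j x)^2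
          + (1/(4*ε^2)) * (1 - ∑ m : Fin 2, (u x m)^2)^2)
      - ∑ j : Fin 2, ∑ i : Fin 2, ∑ l : Fin 2,
          pd (fun y => F y l) i x * pd (fun y => u y j) l x * pd (fun y => u y j) i x)) := by
    refine integral_congr_ae (Filter.Eventually.of_forall fun x => ?_)
    have h := hid x
    rw [← h4]
    linarith [h]
  rw [hXsplit, MeasureTheory.integral_add (hIO _ hdivcont) (hIO _ hRcont), hdiv0, zero_add]
  have hE0 : 0 ≤ ∫ x in D, (1 / 2) * ∑ j : Fin 2, ∑ k : Fin 2, (pd (fun y => u y k) j x) ^ 2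
              + (1 / (4 * ε ^ 2)) * (1 - ∑ i : Fin 2, (u x i) ^ 2) ^ 2 :=
    setIntegral_nonneg hD.measurableSet (fun x _ => by positivity)
  have hEeq : (∫ x in D, (1 / 2) * ∑ j : Fin 2, ∑ k : Fin 2, (pd (fun y => u y k) j x) ^ 2
              + (1 / (4 * ε ^ 2)) * (1 - ∑ i : Fin 2, (u x i) ^ 2) ^ 2)
      = ∫ x in D, ((1/2) * ∑ j : Fin 2, ∑ k : Fin 2, (pd (fun y => u y k) j x)^2
          + (1/(4*ε^2)) * (1 - ∑ m : Fin 2, (u x m)^2)^2) := rfl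
  have habs : |∫ x in D, ((∑ i : Fin 2, pd (fun y => F y i) i x) *
        ((1/2) * ∑ j : Fin 2, ∑ k : Fin 2, (pd (fun y => u y k) j x)^2
          + (1/(4*ε^2)) * (1 - ∑ m : Fin 2, (u x m)^2)^2)
      - ∑ j : Fin 2, ∑ i : Fin 2, ∑ l : Fin 2,
          pd (fun y => F y l) i x * pd (fun y => u y j) l x * pd (fun y => u y j) i x)| ≤ (6*B) * ∫ x in D, (1 / 2) * ∑ j : Fin 2, ∑ k : Fin 2, (pd (fun y => u y k) j x) ^ 2
              + (1 / (4 * ε ^ 2)) * (1 - ∑ i : Fin 2, (u x i) ^ 2) ^ 2 := by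
    rw [hEeq]
    calc |∫ x in D, ((∑ i : Fin 2, pd (fun y => F y i) i x) *
        ((1/2) * ∑ j : Fin 2, ∑ k : Fin 2, (pd (fun y => u y k) j x)^2
          + (1/(4*ε^2)) * (1 - ∑ m : Fin 2, (u x m)^2)^2)
      - ∑ j : Fin 2, ∑ i : Fin 2, ∑ l : Fin 2,
          pd (fun y => F y l) i x * pd (fun y => u y j) l x * pd (fun y => u y j) i x)| ≤ ∫ x in D, |(∑ i : Fin 2, pd (fun y => F y i) i x) *
        ((1/2) * ∑ j : Fin 2, ∑ k : Fin 2, (pd (fun y => u y k) j x)^2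
          + (1/(4*ε^2)) * (1 - ∑ m : Fin 2, (u x m)^2)^2)
      - ∑ j : Fin 2, ∑ i : Fin 2, ∑ l : Fin 2,
          pd (fun y => F y l) i x * pd (fun y => u y j) l x * pd (fun y => u y j) i x| := by
          have hni := norm_integral_le_integral_norm (μ := volume.restrict D) (fun x => (∑ i : Fin 2, pd (fun y => F y i) i x) *
        ((1/2) * ∑ j : Fin 2, ∑ k : Fin 2, (pd (fun y => u y k) j x)^2
          + (1/(4*ε^2)) * (1 - ∑ m : Fin 2, (u x m)^2)^2)
      - ∑ j : Fin 2, ∑ i : Fin 2, ∑ l : Fin 2,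
          pd (fun y => F y l) i x * pd (fun y => u y j) l x * pd (fun y => u y j) i x)
          simpa [Real.norm_eq_abs] using hni
      _ ≤ ∫ x in D, (6*B) * ((1/2) * ∑ j : Fin 2, ∑ k : Fin 2, (pd (fun y => u y k) j x)^2
            + (1/(4*ε^2)) * (1 - ∑ m : Fin 2, (u x m)^2)^2) :=
          setIntegral_mono_on ((hIO _ hRcont).abs) ((hIO _ heC.continuous).const_mul _)
            hD.measurableSet (fun x _ => hRB x)
      _ = (6*B) * ∫ x in D, ((1/2) * ∑ j : Fin 2, ∑ k : Fin 2, (pd (fun y => u y k) j x)^2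
            + (1/(4*ε^2)) * (1 - ∑ m : Fin 2, (u x m)^2)^2) :=
          MeasureTheory.integral_const_mul _ _
  obtain ⟨hl, hr⟩ := abs_le.mp habs
  calc (∫ x in D, ((∑ i : Fin 2, pd (fun y => F y i) i x) *
        ((1/2) * ∑ j : Fin 2, ∑ k : Fin 2, (pd (fun y => u y k) j x)^2
          + (1/(4*ε^2)) * (1 - ∑ m : Fin 2, (u x m)^2)^2)
      - ∑ j : Fin 2, ∑ i : Fin 2, ∑ l : Fin 2,
          pd (fun y => F y l) i x * pd (fun y => u y j) l x * pd (fun y => u y j) i x)) ^ 2 ≤ ((6*B) * ∫ x in D, (1 / 2) * ∑ j : Fin 2, ∑ k : Fin 2, (pd (fun y => u y k) j x) ^ 2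
              + (1 / (4 * ε ^ 2)) * (1 - ∑ i : Fin 2, (u x i) ^ 2) ^ 2) ^ 2 := sq_le_sq' hl hr
    _ = (6*B)^2 * (∫ x in D, (1 / 2) * ∑ j : Fin 2, ∑ k : Fin 2, (pd (fun y => u y k) j x) ^ 2
              + (1 / (4 * ε ^ 2)) * (1 - ∑ i : Fin 2, (u x i) ^ 2) ^ 2) ^ 2 := by ring
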